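/- Let n ∈ ℕ, let Ω ⊆ ℝⁿ be a bounded open set, and let s ∈ (0,1]. For f : ℝⁿ → ℂ define, with values in [0,∞]: N_C(f) := ⨆_{x ∈ Ω} ‖f x‖ₑ; N_{H,σ}(f) := N_C(f) + ⨆ {(x,y) : x,y ∈ Ω, x ≠ y} ‖f x − f y‖ₑ / ‖x − y‖ₑ^σ; and the Zygmund quantity N_{Z,s}(f) := N_{H,s/2}(f) + ⨆ {(x,h) : h ≠ 0, x ∈ Ω, x + h ∈ Ω, x + 2h ∈ Ω} ‖f (x + 2h) − 2 f (x + h) + f x‖ₑ / ‖h‖ₑ^s. Then there exists a constant C > 0, depending only on s, such that for all f, g : ℝⁿ → ℂ one has N_{Z,s}(f · g) ≤ C · N_{Z,s}(f) · N_{Z,s}(g) (an inequality in the extended nonnegative reals). -/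

import Mathlib

open scoped ENNReal NNReal

/-- The sup norm `N_C(f) = ⨆_{x ∈ Ω} ‖f x‖`, valued in `[0,∞]`. -/
noncomputable def NC {n : ℕ} (Ω : Set (EuclideanSpace ℝ (Fin n)))
    (f : EuclideanSpace ℝ (Fin n) → ℂ) : ℝ≥0∞ :=
  ⨆ x ∈ Ω, (‖f x‖₊ : ℝ≥0∞)

/-- The Hölder quantity
`N_{H,σ}(f) = N_C(f) + ⨆_{x ≠ y ∈ Ω} ‖f x − f y‖ / ‖x − y‖^σ`, valued in `[0,∞]`. -/
noncomputable def NH {n : ℕ} (Ω : Set (EuclideanSpace ℝ (Fin n))) (σ : ℝ)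
    (f : EuclideanSpace ℝ (Fin n) → ℂ) : ℝ≥0∞ :=
  NC Ω f + ⨆ x ∈ Ω, ⨆ y ∈ Ω, ⨆ _ : x ≠ y,
    (‖f x - f y‖₊ : ℝ≥0∞) / (‖x - y‖₊ : ℝ≥0∞) ^ σ

/-- The Zygmund quantity
`N_{Z,s}(f) = N_{H,s/2}(f) + ⨆ ‖f(x+2h) − 2 f(x+h) + f x‖ / ‖h‖^s`, the supremum being over
`h ≠ 0` and `x` with `x, x+h, x+2h ∈ Ω`; valued in `[0,∞]`. -/
noncomputable def NZ {n : ℕ} (Ω : Set (EuclideanSpace ℝ (Fin n))) (s : ℝ)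
    (f : EuclideanSpace ℝ (Fin n) → ℂ) : ℝ≥0∞ :=
  NH Ω (s / 2) f +
    ⨆ x : EuclideanSpace ℝ (Fin n), ⨆ h : EuclideanSpace ℝ (Fin n),
      ⨆ _ : h ≠ 0, ⨆ _ : x ∈ Ω, ⨆ _ : x + h ∈ Ω, ⨆ _ : x + (2 : ℝ) • h ∈ Ω,
        (‖f (x + (2 : ℝ) • h) - 2 * f (x + h) + f x‖₊ : ℝ≥0∞) / (‖h‖₊ : ℝ≥0∞) ^ s

private lemma zyg_nn1 (a b p q : ℂ) :
    ‖a * p - b * q‖₊ ≤ ‖a‖₊ * ‖p - q‖₊ + ‖a - b‖₊ * ‖q‖₊ := by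
  calc ‖a * p - b * q‖₊ = ‖a * (p - q) + (a - b) * q‖₊ := by
        rw [show a*p - b*q = a*(p-q) + (a-b)*q from by ring]
    _ ≤ ‖a * (p - q)‖₊ + ‖(a - b) * q‖₊ := nnnorm_add_le _ _
    _ = _ := by rw [nnnorm_mul, nnnorm_mul]

private lemma zyg_nn2 (a b c p q r : ℂ) :
    ‖c * r - 2 * (b * q) + a * p‖₊ ≤
      ‖c‖₊ * ‖r - 2 * q + p‖₊ + ‖c - 2 * b + a‖₊ * ‖p‖₊ + 2 * (‖c - b‖₊ * ‖q - p‖₊) := by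
  calc ‖c * r - 2 * (b * q) + a * p‖₊
      = ‖(c * (r - 2*q + p) + (c - 2*b + a) * p) + 2 * ((c - b) * (q - p))‖₊ := by
        rw [show c*r - 2*(b*q) + a*p = (c*(r - 2*q + p) + (c - 2*b + a)*p) + 2*((c-b)*(q-p)) from by ring]
    _ ≤ (‖c * (r - 2*q + p)‖₊ + ‖(c - 2*b + a) * p‖₊) + ‖2 * ((c - b) * (q - p))‖₊ :=
        (nnnorm_add_le _ _).trans (add_le_add_left (nnnorm_add_le _ _) _)
    _ = _ := by rw [nnnorm_mul, nnnorm_mul, nnnorm_mul, nnnorm_mul]; norm_num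

/-- The Zygmund space `𝒞^s(Ω)` is an algebra.
For `s ∈ (0,1]` there is a constant `C > 0`, depending only on `s`, such that for every
`n`, every bounded open `Ω ⊆ ℝⁿ` and all `f, g : ℝⁿ → ℂ`,
`N_{Z,s}(f·g) ≤ C · N_{Z,s}(f) · N_{Z,s}(g)` in `[0,∞]`. -/
theorem zygmund_algebra (s : ℝ) (hs0 : 0 < s) (hs1 : s ≤ 1) :
    ∃ C : ℝ, 0 < C ∧
      ∀ (n : ℕ) (Ω : Set (EuclideanSpace ℝ (Fin n))),
        Bornology.IsBounded Ω → IsOpen Ω →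
        ∀ f g : EuclideanSpace ℝ (Fin n) → ℂ,
          NZ Ω s (fun x => f x * g x) ≤ ENNReal.ofReal C * NZ Ω s f * NZ Ω s g := by
  refine ⟨7, by norm_num, ?_⟩
  intro n Ω _ _ f g
  -- abbreviations for the three pieces of the norm
  set HS : (EuclideanSpace ℝ (Fin n) → ℂ) → ℝ≥0∞ := fun u =>
    ⨆ x ∈ Ω, ⨆ y ∈ Ω, ⨆ _ : x ≠ y,
      (‖u x - u y‖₊ : ℝ≥0∞) / (‖x - y‖₊ : ℝ≥0∞) ^ (s / 2) with hHSdef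
  set ZS : (EuclideanSpace ℝ (Fin n) → ℂ) → ℝ≥0∞ := fun u =>
    ⨆ x : EuclideanSpace ℝ (Fin n), ⨆ h : EuclideanSpace ℝ (Fin n),
      ⨆ _ : h ≠ 0, ⨆ _ : x ∈ Ω, ⨆ _ : x + h ∈ Ω, ⨆ _ : x + (2 : ℝ) • h ∈ Ω,
        (‖u (x + (2 : ℝ) • h) - 2 * u (x + h) + u x‖₊ : ℝ≥0∞) / (‖h‖₊ : ℝ≥0∞) ^ s
    with hZSdef
  have hNZ : ∀ u, NZ Ω s u = NC Ω u + HS u + ZS u := fun u => rfl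
  -- power denominators are nonzero and finite
  have hpow : ∀ (v : EuclideanSpace ℝ (Fin n)) (t : ℝ), 0 ≤ t → v ≠ 0 →
      ((‖v‖₊ : ℝ≥0∞) ^ t ≠ 0 ∧ (‖v‖₊ : ℝ≥0∞) ^ t ≠ ∞) := by
    intro v t ht hv
    have h0 : (‖v‖₊ : ℝ≥0∞) ≠ 0 := by
      simpa [ENNReal.coe_eq_zero, nnnorm_eq_zero] using hv
    exact ⟨(ENNReal.rpow_pos (pos_iff_ne_zero.2 h0) ENNReal.coe_ne_top).ne',
      ENNReal.rpow_ne_top_of_nonneg ht ENNReal.coe_ne_top⟩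
  -- pointwise estimates from each piece
  have hCpt : ∀ (u : EuclideanSpace ℝ (Fin n) → ℂ) x, x ∈ Ω →
      (‖u x‖₊ : ℝ≥0∞) ≤ NC Ω u := by
    intro u x hx
    exact le_iSup₂ (f := fun x (_ : x ∈ Ω) => ((‖u x‖₊ : ℝ≥0∞))) x hx
  have hHpt : ∀ (u : EuclideanSpace ℝ (Fin n) → ℂ) x y, x ∈ Ω → y ∈ Ω →
      (‖u x - u y‖₊ : ℝ≥0∞) ≤ HS u * (‖x - y‖₊ : ℝ≥0∞) ^ (s / 2) := by
    intro u x y hx hy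
    rcases eq_or_ne x y with rfl | hxy
    · simp
    · have hd := hpow (x - y) (s / 2) (by positivity) (sub_ne_zero.2 hxy)
      have h1 : (‖u x - u y‖₊ : ℝ≥0∞) / (‖x - y‖₊ : ℝ≥0∞) ^ (s / 2) ≤ HS u :=
        le_iSup₂_of_le x hx (le_iSup₂_of_le y hy (le_iSup_of_le hxy le_rfl))
      exact (ENNReal.div_le_iff hd.1 hd.2).1 h1
  have hZpt : ∀ (u : EuclideanSpace ℝ (Fin n) → ℂ) x h, h ≠ 0 → x ∈ Ω → x + h ∈ Ω →
      x + (2 : ℝ) • h ∈ Ω →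
      (‖u (x + (2 : ℝ) • h) - 2 * u (x + h) + u x‖₊ : ℝ≥0∞) ≤
        ZS u * (‖h‖₊ : ℝ≥0∞) ^ s := by
    intro u x h hne hx hx1 hx2
    have hd := hpow h s hs0.le hne
    have h1 : (‖u (x + (2 : ℝ) • h) - 2 * u (x + h) + u x‖₊ : ℝ≥0∞) / (‖h‖₊ : ℝ≥0∞) ^ s
        ≤ ZS u :=
      le_iSup_of_le x (le_iSup_of_le h (le_iSup_of_le hne (le_iSup_of_le hx
        (le_iSup_of_le hx1 (le_iSup_of_le hx2 le_rfl)))))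
    exact (ENNReal.div_le_iff hd.1 hd.2).1 h1
  -- each piece is below the full norm
  have hCle : ∀ u, NC Ω u ≤ NZ Ω s u := fun u => by
    rw [hNZ]; exact le_add_right (le_add_right le_rfl)
  have hHle : ∀ u, HS u ≤ NZ Ω s u := fun u => by
    rw [hNZ]; exact le_add_right le_add_self
  have hZle : ∀ u, ZS u ≤ NZ Ω s u := fun u => by
    rw [hNZ]; exact le_add_self
  set F := NZ Ω s f
  set G := NZ Ω s g
  -- bound the three pieces of the product norm
  have b1 : NC Ω (fun x => f x * g x) ≤ F * G := by
    refine iSup₂_le fun x hx => ?_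
    calc (‖f x * g x‖₊ : ℝ≥0∞) = (‖f x‖₊ : ℝ≥0∞) * (‖g x‖₊ : ℝ≥0∞) := by
          rw [nnnorm_mul]; exact_mod_cast rfl
      _ ≤ F * G := mul_le_mul' ((hCpt f x hx).trans (hCle f))
          ((hCpt g x hx).trans (hCle g))
  have b2 : HS (fun x => f x * g x) ≤ 2 * (F * G) := by
    refine iSup₂_le fun x hx => iSup₂_le fun y hy => iSup_le fun hxy => ?_
    have hd := hpow (x - y) (s / 2) (by positivity) (sub_ne_zero.2 hxy)
    rw [ENNReal.div_le_iff hd.1 hd.2]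
    set d : ℝ≥0∞ := (‖x - y‖₊ : ℝ≥0∞) ^ (s / 2)
    calc (‖f x * g x - f y * g y‖₊ : ℝ≥0∞)
        ≤ (‖f x‖₊ : ℝ≥0∞) * ‖g x - g y‖₊ + (‖f x - f y‖₊ : ℝ≥0∞) * ‖g y‖₊ := by
          exact_mod_cast zyg_nn1 (f x) (f y) (g x) (g y)
      _ ≤ F * (G * d) + (F * d) * G :=
          add_le_add
            (mul_le_mul' ((hCpt f x hx).trans (hCle f))
              ((hHpt g x y hx hy).trans (mul_le_mul_left (hHle g) d)))
            (mul_le_mul' ((hHpt f x y hx hy).trans (mul_le_mul_left (hHle f) d))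
              ((hCpt g y hy).trans (hCle g)))
      _ = 2 * (F * G) * d := by ring
  have b3 : ZS (fun x => f x * g x) ≤ 4 * (F * G) := by
    refine iSup_le fun x => iSup_le fun h => iSup_le fun hne => iSup_le fun hx =>
      iSup_le fun hx1 => iSup_le fun hx2 => ?_
    have hd := hpow h s hs0.le hne
    rw [ENNReal.div_le_iff hd.1 hd.2]
    set D : ℝ≥0∞ := (‖h‖₊ : ℝ≥0∞) ^ s with hD
    set E : ℝ≥0∞ := (‖h‖₊ : ℝ≥0∞) ^ (s / 2) with hE
    have hh0 : (‖h‖₊ : ℝ≥0∞) ≠ 0 := by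
      simpa [ENNReal.coe_eq_zero, nnnorm_eq_zero] using hne
    have hED : E * E = D := by
      rw [hE, hD, ← ENNReal.rpow_add _ _ hh0 ENNReal.coe_ne_top]
      norm_num
    have key1 : (x + (2 : ℝ) • h) - (x + h) = h := by
      rw [two_smul]; abel
    have key2 : (x + h) - x = h := add_sub_cancel_left x h
    have hcb : (‖f (x + (2 : ℝ) • h) - f (x + h)‖₊ : ℝ≥0∞) ≤ F * E := by
      have := hHpt f (x + (2 : ℝ) • h) (x + h) hx2 hx1
      rw [key1] at this
      exact this.trans (mul_le_mul_left (hHle f) E)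
    have hqp : (‖g (x + h) - g x‖₊ : ℝ≥0∞) ≤ G * E := by
      have := hHpt g (x + h) x hx1 hx
      rw [key2] at this
      exact this.trans (mul_le_mul_left (hHle g) E)
    calc (‖f (x + (2 : ℝ) • h) * g (x + (2 : ℝ) • h)
            - 2 * (f (x + h) * g (x + h)) + f x * g x‖₊ : ℝ≥0∞)
        ≤ (‖f (x + (2 : ℝ) • h)‖₊ : ℝ≥0∞) *
              ‖g (x + (2 : ℝ) • h) - 2 * g (x + h) + g x‖₊
            + (‖f (x + (2 : ℝ) • h) - 2 * f (x + h) + f x‖₊ : ℝ≥0∞) * ‖g x‖₊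
            + 2 * ((‖f (x + (2 : ℝ) • h) - f (x + h)‖₊ : ℝ≥0∞) *
              ‖g (x + h) - g x‖₊) := by
          exact_mod_cast zyg_nn2 (f x) (f (x + h)) (f (x + (2 : ℝ) • h))
            (g x) (g (x + h)) (g (x + (2 : ℝ) • h))
      _ ≤ F * (G * D) + (F * D) * G + 2 * ((F * E) * (G * E)) :=
          add_le_add (add_le_add
            (mul_le_mul' ((hCpt f _ hx2).trans (hCle f))
              ((hZpt g x h hne hx hx1 hx2).trans (mul_le_mul_left (hZle g) D)))
            (mul_le_mul' ((hZpt f x h hne hx hx1 hx2).trans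
              (mul_le_mul_left (hZle f) D))
              ((hCpt g x hx).trans (hCle g))))
            (mul_le_mul_right (mul_le_mul' hcb hqp) 2)
      _ = 4 * (F * G) * D := by rw [← hED]; ring
  calc NZ Ω s (fun x => f x * g x) = NC Ω (fun x => f x * g x)
        + HS (fun x => f x * g x) + ZS (fun x => f x * g x) := hNZ _
    _ ≤ F * G + 2 * (F * G) + 4 * (F * G) := add_le_add (add_le_add b1 b2) b3
    _ = ENNReal.ofReal 7 * F * G := by
        rw [show ENNReal.ofReal (7 : ℝ) = (7 : ℝ≥0∞) by norm_num]; ring
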